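/- Let b : ℕ → ℚ satisfy b(0)=1, b(1)=-1, b(2)=A with A ≤ 0, and b(n) = -(1/2)·∑_{k=0}^{n-1} b(k)·C(n+1,k+1) for n ≥ 3. Define s(j,d) = ∑_{k=j}^{d} (1/(k+1))·C(d-j,d-k)·b(k). Then for every m ≥ 1: s(j,4m) ≥ 0 for all 0 ≤ j ≤ 4m, and s(j,4m+2) ≤ 0 for all 0 ≤ j ≤ 4m+2. -/

import Mathlib

open Finset

section
variable (b : ℕ → ℚ) (s : ℕ → ℕ → ℚ)
  (hs : ∀ j d, s j d = ∑ k ∈ Finset.Icc j d,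
      (1 / (k + 1 : ℚ)) * ((d - j).choose (d - k) : ℚ) * b k)
  (hrec : ∀ n, 3 ≤ n →
      2 * b n = -∑ k ∈ Finset.range n, b k * ((n + 1).choose (k + 1) : ℚ))

include hs


private lemma diag (d : ℕ) : s d d = (1/(d+1 : ℚ)) * b d := by
  rw [hs]; rw [Finset.Icc_self, Finset.sum_singleton]; simp

private lemma pascal (j d : ℕ) (hj : j ≤ d) : s j (d+1) = s j d + s (j+1) (d+1) := by
  rw [hs, hs, hs]
  have hext : ∑ k ∈ Icc (j+1) d, (1 / (k + 1 : ℚ)) * ((d + 1 - (j+1)).choose (d + 1 - k) : ℚ) * b k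
      = ∑ k ∈ Icc j d, (1 / (k + 1 : ℚ)) * ((d - j).choose (d + 1 - k) : ℚ) * b k := by
    simp only [show d+1-(j+1) = d - j from by omega]
    rw [Finset.Icc_eq_cons_Ioc hj, Finset.sum_cons, ← Finset.Icc_add_one_left_eq_Ioc]
    have h0 : ((d - j).choose (d + 1 - j) : ℚ) = 0 := by
      rw [Nat.choose_eq_zero_of_lt (by omega)]; simp
    rw [h0]; ring
  have hmain : ∀ k ∈ Icc j d,
      (1 / (k + 1 : ℚ)) * ((d + 1 - j).choose (d + 1 - k) : ℚ) * b k
      = (1 / (k + 1 : ℚ)) * ((d - j).choose (d - k) : ℚ) * b k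
        + (1 / (k + 1 : ℚ)) * ((d - j).choose (d + 1 - k) : ℚ) * b k := by
    intro k hk
    simp only [Finset.mem_Icc] at hk
    rw [show d + 1 - j = (d - j) + 1 from by omega, show d + 1 - k = (d - k) + 1 from by omega,
      Nat.choose_succ_succ]
    push_cast
    ring
  rw [Finset.sum_Icc_succ_top (by omega : j ≤ d+1), Finset.sum_Icc_succ_top (by omega : j+1 ≤ d+1),
    Finset.sum_congr rfl hmain, Finset.sum_add_distrib, hext]
  simp only [Nat.sub_self, Nat.choose_zero_right, Nat.cast_one]
  ring

private lemma telescope (d j : ℕ) (hj : j ≤ d+1) :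
    s j (d+1) = (∑ i ∈ Icc j d, s i d) + s (d+1) (d+1) := by
  obtain ⟨t, rfl⟩ : ∃ t, j = d+1-t := ⟨d+1-j, by omega⟩
  clear hj
  induction t with
  | zero => simp [Finset.Icc_eq_empty_of_lt (by omega : d < d+1-0)]
  | succ t ih =>
    by_cases hc : d + 1 ≤ t
    · rw [show d+1-(t+1) = d+1-t from by omega]; exact ih
    · rw [show d+1-(t+1) = d-t from by omega]
      rw [pascal b s hs (d-t) d (by omega), show d - t + 1 = d+1-t from by omega, ih]
      rw [Finset.Icc_eq_cons_Ioc (by omega : d - t ≤ d), Finset.sum_cons, ← Finset.Icc_add_one_left_eq_Ioc,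
        show d - t + 1 = d+1-t from by omega]
      ring

include hrec in
private lemma edge (d : ℕ) (hd : 3 ≤ d) : s 0 d = - s d d := by
  have hd1 : ((d:ℚ)+1) ≠ 0 := by positivity
  have key : ((d:ℚ)+1) * s 0 d = - b d := by
    rw [hs, Finset.mul_sum]
    have hpt : ∀ k ∈ Icc 0 d, ((d:ℚ)+1) * ((1/((k:ℚ)+1)) * ((d-0).choose (d-k) : ℚ) * b k)
        = b k * (((d+1).choose (k+1) : ℚ)) := by
      intro k hk
      simp only [Finset.mem_Icc] at hk
      have h1 : (d:ℕ).choose (d - k) = d.choose k := Nat.choose_symm hk.2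
      have h2 : (d+1) * d.choose k = (d+1).choose (k+1) * (k+1) := by
        rw [← Nat.add_one_mul_choose_eq]
      have h2q : ((d:ℚ)+1) * (d.choose k : ℚ) = ((d+1).choose (k+1) : ℚ) * ((k:ℚ)+1) := by
        exact_mod_cast h2
      have hk1 : ((k:ℚ)+1) ≠ 0 := by positivity
      rw [Nat.sub_zero, h1]
      field_simp
      linear_combination b k * h2q
    rw [Finset.sum_congr rfl hpt]
    rw [show Finset.Icc 0 d = Finset.range (d+1) from by ext x; simp [Nat.lt_succ_iff]]
    rw [Finset.sum_range_succ]
    have h := hrec d hd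
    rw [Nat.choose_self]
    push_cast
    linarith
  have key2 : ((d:ℚ)+1) * s d d = b d := by
    rw [diag b s hs]
    field_simp
  have : ((d:ℚ)+1) * s 0 d = ((d:ℚ)+1) * (- s d d) := by
    rw [key]; linarith
  exact mul_left_cancel₀ hd1 this

include hrec in
private lemma sym (h0 : b 0 = 1) (h1 : b 1 = -1) :
    ∀ d, ∀ j ≤ d, s j d = (-1:ℚ)^d * s (d-j) d := by
  have hb3 : b 3 = 1 - 2 * b 2 := by
    have h := hrec 3 (le_refl 3)
    simp [Finset.sum_range_succ, h0, h1] at h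
    norm_num [Nat.choose] at h
    linarith
  intro d
  induction d using Nat.strong_induction_on with
  | _ d ih =>
    rcases lt_or_ge d 4 with hd4 | hd4
    · -- base cases d = 0,1,2,3
      interval_cases d <;> intro j hj <;> interval_cases j <;>
        simp only [hs] <;>
        simp [show Finset.Icc 0 0 = {0} from rfl, show Finset.Icc 0 1 = {0,1} from rfl,
          show Finset.Icc 1 1 = {1} from rfl, show Finset.Icc 0 2 = {0,1,2} from rfl,
          show Finset.Icc 1 2 = {1,2} from rfl, show Finset.Icc 2 2 = {2} from rfl,
          show Finset.Icc 0 3 = {0,1,2,3} from rfl, show Finset.Icc 1 3 = {1,2,3} from rfl,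
          show Finset.Icc 2 3 = {2,3} from rfl, show Finset.Icc 3 3 = {3} from rfl,
          h0, h1, hb3, Nat.choose] <;> try ring
    · -- step: d = e+1 with e ≥ 3
      obtain ⟨e, rfl⟩ : ∃ e, d = e + 1 := ⟨d-1, by omega⟩
      have he : 3 ≤ e := by omega
      have ihe := ih e (by omega)
      have hedge : s 0 (e+1) = (-1:ℚ)^(e+1) * s (e+1) (e+1) := by
        rcases Nat.even_or_odd (e+1) with hpar | hpar
        · -- e+1 even, e odd
          rw [hpar.neg_one_pow, one_mul]
          rw [telescope b s hs e 0 (by omega)]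
          have hodd : Odd e := by
            rcases Nat.even_or_odd e with h | h
            · exfalso; exact (Nat.even_add_one.mp hpar) h
            · exact h
          have hsum : ∑ i ∈ Icc 0 e, s i e = 0 := by
            have hrefl : ∑ i ∈ Finset.range (e+1), s (e - i) e
                = ∑ i ∈ Finset.range (e+1), s i e := by
              have := Finset.sum_range_reflect (fun i => s i e) (e+1)
              simpa using this
            have hpt : ∀ i ∈ Finset.range (e+1), s i e = - s (e - i) e := by
              intro i hi
              simp only [Finset.mem_range] at hi
              rw [ihe i (by omega), hodd.neg_one_pow]
              ring
            have hIr : Finset.Icc 0 e = Finset.range (e+1) := by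
              ext x; simp [Nat.lt_succ_iff]
            rw [hIr]
            have h2 : ∑ i ∈ Finset.range (e+1), s i e
                = - ∑ i ∈ Finset.range (e+1), s (e - i) e := by
              rw [Finset.sum_congr rfl hpt, Finset.sum_neg_distrib]
            rw [hrefl] at h2
            linarith
          rw [hsum, zero_add]
        · -- e+1 odd
          rw [hpar.neg_one_pow]
          have := edge b s hs hrec (e+1) (by omega)
          linarith
      -- constancy
      have hsq : (-1:ℚ)^e * (-1:ℚ)^e = 1 := by
        rw [← pow_add]
        exact Even.neg_one_pow ⟨e, rfl⟩
      have hsign : (-1:ℚ)^(e+1) = -((-1:ℚ)^e) := by rw [pow_succ]; ring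
      have claim : ∀ t ≤ e+1, s (e+1-t) (e+1) = (-1:ℚ)^(e+1) * s t (e+1) := by
        intro t
        induction t with
        | zero =>
          intro _
          simp only [Nat.sub_zero]
          have hsq1 : (-1:ℚ)^(e+1) * (-1:ℚ)^(e+1) = 1 := by
            rw [← pow_add]
            exact Even.neg_one_pow ⟨e+1, rfl⟩
          linear_combination (-(-1:ℚ)^(e+1)) * hedge + (- s (e+1) (e+1)) * hsq1
        | succ t iht =>
          intro ht
          have iht' := iht (by omega)
          have eq1 : s (e-t) (e+1) = s (e-t) e + s (e+1-t) (e+1) := by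
            have := pascal b s hs (e-t) e (by omega)
            rwa [show e - t + 1 = e + 1 - t from by omega] at this
          have eq3 : s t (e+1) = s t e + s (t+1) (e+1) := pascal b s hs t e (by omega)
          have eq4 : s t e = (-1:ℚ)^e * s (e-t) e := ihe t (by omega)
          rw [show e + 1 - (t+1) = e - t from by omega]
          rw [eq1, iht', eq3, eq4, hsign]
          linear_combination (- s (e-t) e) * hsq
      intro j hj
      have := claim (e+1-j) (by omega)
      rwa [show e+1-(e+1-j) = j from by omega] at this

omit hs in
private lemma split_range (j d : ℕ) (hj : j ≤ d+1) (f : ℕ → ℚ) :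
    ∑ i ∈ Finset.range (d+1), f i = (∑ i ∈ Finset.range j, f i) + ∑ i ∈ Finset.Icc j d, f i := by
  rw [Finset.range_eq_Ico, ← Finset.Ico_add_one_right_eq_Icc, ← Finset.sum_Ico_consecutive _ (Nat.zero_le j) hj, Finset.range_eq_Ico]

omit hs in
private lemma split_Icc (a m d : ℕ) (h1 : a ≤ m+1) (h2 : m ≤ d) (f : ℕ → ℚ) :
    ∑ i ∈ Finset.Icc a d, f i = (∑ i ∈ Finset.Icc a m, f i) + ∑ i ∈ Finset.Icc (m+1) d, f i := by
  rw [← Finset.Ico_add_one_right_eq_Icc, ← Finset.Ico_add_one_right_eq_Icc, ← Finset.Ico_add_one_right_eq_Icc,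
    ← Finset.sum_Ico_consecutive _ h1 (by omega : m+1 ≤ d+1)]

include hrec in
private lemma colsum_odd (h0 : b 0 = 1) (h1 : b 1 = -1) (e : ℕ) (he : Odd e) :
    ∑ i ∈ Finset.Icc 0 e, s i e = 0 := by
  have hrefl : ∑ i ∈ Finset.range (e+1), s (e - i) e
      = ∑ i ∈ Finset.range (e+1), s i e := by
    have := Finset.sum_range_reflect (fun i => s i e) (e+1)
    simpa using this
  have hpt : ∀ i ∈ Finset.range (e+1), s i e = - s (e - i) e := by
    intro i hi
    simp only [Finset.mem_range] at hi
    rw [sym b s hs hrec h0 h1 e i (by omega), he.neg_one_pow]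
    ring
  have hIr : Finset.Icc 0 e = Finset.range (e+1) := by
    ext x; simp [Nat.lt_succ_iff]
  rw [hIr]
  have h2 : ∑ i ∈ Finset.range (e+1), s i e
      = - ∑ i ∈ Finset.range (e+1), s (e - i) e := by
    rw [Finset.sum_congr rfl hpt, Finset.sum_neg_distrib]
  rw [hrefl] at h2
  linarith

include hrec in
private lemma even_ends (h0 : b 0 = 1) (h1 : b 1 = -1) (d : ℕ) (hd : 4 ≤ d) (hde : Even d) :
    s 0 d = 0 ∧ s d d = 0 := by
  obtain ⟨e, rfl⟩ : ∃ e, d = e + 1 := ⟨d-1, by omega⟩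
  have he : Odd e := by
    rcases Nat.even_or_odd e with hh | hh
    · exact absurd hh (Nat.even_add_one.mp hde)
    · exact hh
  have t0 := telescope b s hs e 0 (by omega)
  rw [colsum_odd b s hs hrec h0 h1 e he, zero_add] at t0
  have hedge := edge b s hs hrec (e+1) (by omega)
  constructor <;> linarith

include hrec in
private lemma halfcol (h0 : b 0 = 1) (h1 : b 1 = -1) (d : ℕ) (hde : Even d) (j : ℕ) (hj : 2*j ≤ d) :
    2 * s j (d+1) = ∑ i ∈ Finset.Icc j (d-j), s i d := by
  have htel := telescope b s hs d j (by omega)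
  have htel0 := telescope b s hs d 0 (by omega)
  have hanti : s 0 (d+1) = - s (d+1) (d+1) := by
    have := sym b s hs hrec h0 h1 (d+1) 0 (by omega)
    have hodd : Odd (d+1) := Even.add_one hde
    rw [hodd.neg_one_pow] at this
    simpa using this
  have hIr : Finset.Icc 0 d = Finset.range (d+1) := by
    ext x; simp [Nat.lt_succ_iff]
  -- reflection of the initial segment
  have hrefl : ∑ i ∈ Finset.range j, s i d = ∑ i ∈ Finset.Icc (d-j+1) d, s i d := by
    have hpt : ∀ i ∈ Finset.range j, s i d = s (d - i) d := by
      intro i hi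
      simp only [Finset.mem_range] at hi
      rw [sym b s hs hrec h0 h1 d i (by omega), hde.neg_one_pow, one_mul]
    rw [Finset.sum_congr rfl hpt]
    apply Finset.sum_nbij' (fun i => d - i) (fun i => d - i)
    · intro a ha; simp only [Finset.mem_range] at ha; simp only [Finset.mem_Icc]; omega
    · intro a ha; simp only [Finset.mem_Icc] at ha; simp only [Finset.mem_range]; omega
    · intro a ha; simp only [Finset.mem_range] at ha; omega
    · intro a ha; simp only [Finset.mem_Icc] at ha; omega
    · intro a ha; rfl
  have hsplit1 : ∑ i ∈ Finset.range (d+1), s i d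
      = (∑ i ∈ Finset.range j, s i d) + ∑ i ∈ Finset.Icc j d, s i d :=
    split_range j d (by omega) _
  have hsplit2 : ∑ i ∈ Finset.Icc j d, s i d
      = (∑ i ∈ Finset.Icc j (d-j), s i d) + ∑ i ∈ Finset.Icc (d-j+1) d, s i d :=
    split_Icc j (d-j) d (by omega) (by omega) _
  rw [hIr] at htel0
  linarith

include hrec in
private lemma oddcol_sign (h0 : b 0 = 1) (h1 : b 1 = -1) (ε : ℚ) (d : ℕ) (hde : Even d)
    (h : ∀ j ≤ d, 0 ≤ ε * s j d) (j : ℕ) (hj : 2*j ≤ d) : 0 ≤ ε * s j (d+1) := by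
  have hh := halfcol b s hs hrec h0 h1 d hde j hj
  have h2 : 2 * (ε * s j (d+1)) = ∑ i ∈ Finset.Icc j (d-j), ε * s i d := by
    rw [← Finset.mul_sum, ← hh]; ring
  have h3 : 0 ≤ ∑ i ∈ Finset.Icc j (d-j), ε * s i d := by
    apply Finset.sum_nonneg
    intro i hi
    simp only [Finset.mem_Icc] at hi
    exact h i (by omega)
  linarith

include hrec in
private lemma step (h0 : b 0 = 1) (h1 : b 1 = -1) (ε : ℚ) (d : ℕ) (hd : 4 ≤ d) (hde : Even d)
    (h : ∀ j ≤ d, 0 ≤ ε * s j d) : ∀ j ≤ d+2, ε * s j (d+2) ≤ 0 := by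
  have hde2 : Even (d+2) := by
    obtain ⟨r, hr⟩ := hde; exact ⟨r+1, by omega⟩
  have hend := (even_ends b s hs hrec h0 h1 (d+2) (by omega) hde2).2
  have hodd1 : Odd (d+1) := Even.add_one hde
  have hcs : ∑ i ∈ Finset.Icc 0 (d+1), s i (d+1) = 0 :=
    colsum_odd b s hs hrec h0 h1 (d+1) hodd1
  have main : ∀ j, 2*j ≤ d+2 → ε * s j (d+2) ≤ 0 := by
    intro j hj
    have htel := telescope b s hs (d+1) j (by omega)
    rw [hend, add_zero] at htel
    have hIr : Finset.Icc 0 (d+1) = Finset.range (d+2) := by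
      ext x; simp [Nat.lt_succ_iff]
    rw [hIr] at hcs
    have hsplit : ∑ i ∈ Finset.range (d+2), s i (d+1)
        = (∑ i ∈ Finset.range j, s i (d+1)) + ∑ i ∈ Finset.Icc j (d+1), s i (d+1) :=
      split_range j (d+1) (by omega) _
    have hsum : 0 ≤ ∑ i ∈ Finset.range j, ε * s i (d+1) := by
      apply Finset.sum_nonneg
      intro i hi
      simp only [Finset.mem_range] at hi
      exact oddcol_sign b s hs hrec h0 h1 ε d hde h i (by omega)
    rw [← Finset.mul_sum] at hsum
    have hIccval : ∑ i ∈ Finset.Icc j (d+1), s i (d+1)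
        = - ∑ i ∈ Finset.range j, s i (d+1) := by linarith
    calc ε * s j (d+2) = ε * ∑ i ∈ Finset.Icc j (d+1), s i (d+1) := by rw [htel]
      _ = -(ε * ∑ i ∈ Finset.range j, s i (d+1)) := by rw [hIccval]; ring
      _ ≤ 0 := by linarith
  intro j hj
  rcases le_or_gt (2*j) (d+2) with hc | hc
  · exact main j hc
  · have hsym := sym b s hs hrec h0 h1 (d+2) j hj
    rw [hde2.neg_one_pow, one_mul] at hsym
    rw [hsym]
    exact main (d+2-j) (by omega)

include hrec in
private lemma base4 (h0 : b 0 = 1) (h1 : b 1 = -1) (hA2 : b 2 ≤ 0) : ∀ j ≤ 4, 0 ≤ s j 4 := by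
  have hb3 : b 3 = 1 - 2 * b 2 := by
    have h := hrec 3 (le_refl 3)
    simp [Finset.sum_range_succ, h0, h1] at h
    norm_num [Nat.choose] at h
    linarith
  have hb4 : b 4 = 0 := by
    have h := hrec 4 (by norm_num)
    simp [Finset.sum_range_succ, h0, h1, hb3] at h
    norm_num [Nat.choose] at h
    linarith
  intro j hj
  interval_cases j <;> simp only [hs] <;>
    simp [show Finset.Icc 0 4 = {0,1,2,3,4} from rfl, show Finset.Icc 1 4 = {1,2,3,4} from rfl,
      show Finset.Icc 2 4 = {2,3,4} from rfl, show Finset.Icc 3 4 = {3,4} from rfl,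
      show Finset.Icc 4 4 = {4} from rfl, h0, h1, hb3, hb4, Nat.choose] <;>
    linarith

end

theorem stmt_9 (A : ℚ) (hA : A ≤ 0) (b : ℕ → ℚ)
    (h0 : b 0 = 1) (h1 : b 1 = -1) (h2 : b 2 = A)
    (hrec : ∀ n, 3 ≤ n →
      2 * b n = -∑ k ∈ Finset.range n, b k * ((n + 1).choose (k + 1) : ℚ))
    (s : ℕ → ℕ → ℚ)
    (hs : ∀ j d, s j d = ∑ k ∈ Finset.Icc j d,
      (1 / (k + 1 : ℚ)) * ((d - j).choose (d - k) : ℚ) * b k) :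
    ∀ m, 1 ≤ m →
      (∀ j, j ≤ 4 * m → 0 ≤ s j (4 * m)) ∧
      (∀ j, j ≤ 4 * m + 2 → s j (4 * m + 2) ≤ 0) := by
  have hA2 : b 2 ≤ 0 := by rw [h2]; exact hA
  intro m hm
  induction m, hm using Nat.le_induction with
  | base =>
    have hcol4 : ∀ j ≤ 4, 0 ≤ s j 4 := base4 b s hs hrec h0 h1 hA2
    constructor
    · intro j hj
      have : (4 : ℕ) * 1 = 4 := by norm_num
      rw [this] at hj ⊢
      exact hcol4 j hj
    · intro j hj
      have h6 : (4 : ℕ) * 1 + 2 = 4 + 2 := by norm_num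
      rw [h6] at hj ⊢
      have := step b s hs hrec h0 h1 1 4 (le_refl 4) ⟨2, by norm_num⟩
        (fun j hj => by rw [one_mul]; exact hcol4 j hj) j hj
      linarith
  | succ m hm ih =>
    have hup : ∀ j ≤ 4*m + 4, 0 ≤ s j (4*m + 4) := by
      intro j hj
      have hcol : ∀ j ≤ 4*m + 2, 0 ≤ (-1 : ℚ) * s j (4*m + 2) := by
        intro j hj
        have := ih.2 j hj
        linarith
      have := step b s hs hrec h0 h1 (-1) (4*m+2) (by omega) ⟨2*m+1, by ring⟩
        hcol j (by omega)
      linarith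
    have hdown : ∀ j ≤ 4*m + 6, s j (4*m + 6) ≤ 0 := by
      intro j hj
      have := step b s hs hrec h0 h1 1 (4*m+4) (by omega) ⟨2*m+2, by ring⟩
        (fun j hj => by rw [one_mul]; exact hup j hj) j (by omega)
      linarith
    constructor
    · intro j hj
      have e1 : 4 * (m+1) = 4*m + 4 := by ring
      rw [e1] at hj ⊢
      exact hup j hj
    · intro j hj
      have e2 : 4 * (m+1) + 2 = 4*m + 6 := by ring
      rw [e2] at hj ⊢
      exact hdown j hj
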